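/- Epsilon-characterization of the safety value level set: V_K x ≥ 0 if and only if for every ε > 0 there exists a control sequence u : ℕ → U with l (traj x u k) ≥ -ε for all k ≤ K. -/
import Mathlib


def traj {X U : Type*} (f : X → U → X) (x : X) (u : ℕ → U) : ℕ → X
  | 0 => x
  | k + 1 => f (traj f x u k) (u k)

noncomputable def safetyVal {X U : Type*} (f : X → U → X) (l : X → ℝ) : ℕ → X → ℝ
  | 0, x => l x
  | K + 1, x => min (l x) (⨆ u : U, safetyVal f l K (f x u))

lemma traj_shift {X U : Type*} (f : X → U → X) (x : X) (u : ℕ → U) (k : ℕ) :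
    traj f x u (k + 1) = traj f (f x (u 0)) (fun n => u (n + 1)) k := by
  induction k with
  | zero => rfl
  | succ k ih =>
    show f (traj f x u (k+1)) (u (k+1)) = _
    rw [ih]; rfl

lemma safetyVal_le {X U : Type*} [Nonempty U] (f : X → U → X) (l : X → ℝ) {M : ℝ}
    (hM : ∀ x : X, l x ≤ M) : ∀ K x, safetyVal f l K x ≤ M := by
  intro K
  cases K with
  | zero => exact hM
  | succ K => intro x; exact le_trans (min_le_left _ _) (hM x)

lemma safetyVal_lower {X U : Type*} [Nonempty U] (f : X → U → X) (l : X → ℝ) {M : ℝ}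
    (hM : ∀ x : X, l x ≤ M) :
    ∀ K x (u : ℕ → U) (c : ℝ), (∀ k ≤ K, l (traj f x u k) ≥ c) → safetyVal f l K x ≥ c := by
  intro K
  induction K with
  | zero => intro x u c h; exact h 0 (le_refl 0)
  | succ K ih =>
    intro x u c h
    refine le_min (h 0 (Nat.zero_le _)) ?_
    have h1 : safetyVal f l K (f x (u 0)) ≥ c := by
      apply ih (f x (u 0)) (fun n => u (n + 1))
      intro k hk
      rw [← traj_shift]
      exact h (k + 1) (Nat.succ_le_succ hk)
    refine le_trans h1 (le_ciSup (f := fun v => safetyVal f l K (f x v)) ?_ (u 0))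
    exact ⟨M, by rintro y ⟨v, rfl⟩; exact safetyVal_le f l hM K _⟩

lemma safetyVal_upper {X U : Type*} [Nonempty U] (f : X → U → X) (l : X → ℝ) :
    ∀ K x (ε : ℝ), ε > 0 → ∃ u : ℕ → U, ∀ k ≤ K,
      l (traj f x u k) ≥ safetyVal f l K x - ε := by
  intro K
  induction K with
  | zero =>
    intro x ε hε
    refine ⟨fun _ => Classical.arbitrary U, ?_⟩
    intro k hk
    interval_cases k
    simp [traj, safetyVal]; linarith
  | succ K ih =>
    intro x ε hε
    have hlt : safetyVal f l (K + 1) x - ε / 2 < ⨆ u : U, safetyVal f l K (f x u) := by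
      have : safetyVal f l (K + 1) x ≤ ⨆ u : U, safetyVal f l K (f x u) := min_le_right _ _
      linarith
    obtain ⟨u0, hu0⟩ := exists_lt_of_lt_ciSup hlt
    obtain ⟨u, hu⟩ := ih (f x u0) (ε / 2) (by linarith)
    refine ⟨fun n => Nat.rec u0 (fun k _ => u k) n, ?_⟩
    intro k hk
    cases k with
    | zero =>
      have : safetyVal f l (K + 1) x ≤ l x := min_le_left _ _
      simpa [traj] using by linarith
    | succ k =>
      rw [traj_shift]
      have := hu k (Nat.le_of_succ_le_succ hk)
      calc l (traj f (f x u0) (fun n => u n) k) ≥ safetyVal f l K (f x u0) - ε / 2 := this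
        _ ≥ safetyVal f l (K + 1) x - ε := by linarith

theorem safetyVal_nonneg_iff_eps {X U : Type*} [Nonempty U] (f : X → U → X) (l : X → ℝ)
    (hbdd : ∃ M : ℝ, ∀ x : X, l x ≤ M) (K : ℕ) (x : X) :
    safetyVal f l K x ≥ 0 ↔
      ∀ ε : ℝ, ε > 0 → ∃ u : ℕ → U, ∀ k ≤ K, l (traj f x u k) ≥ -ε := by
  obtain ⟨M, hM⟩ := hbdd
  constructor
  · intro h ε hε
    obtain ⟨u, hu⟩ := safetyVal_upper f l K x ε hε
    exact ⟨u, fun k hk => le_trans (by linarith) (hu k hk)⟩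
  · intro h
    by_contra hneg
    push_neg at hneg
    obtain ⟨u, hu⟩ := h (-safetyVal f l K x / 2) (by linarith)
    have := safetyVal_lower f l hM K x u _ hu
    linarith
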